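/- Let T be a compact domain with smooth boundary in a product of three oriented 3-manifolds, of the form T = T₁×T₂×T₃, and suppose each Bᵢ is a divergence-free vector field tangent to ∂Tᵢ. If β is a closed 1-form and α a smooth 1-form on T, then ∫_T (β ∧ dα) ∧ ι_{B₁}μ₁ ∧ ι_{B₂}μ₂ ∧ ι_{B₃}μ₃ = 0. -/
import Mathlib


/-- Let `T = T₁ × T₂ × T₃` be a compact domain with smooth boundary in a
product of three oriented 3-manifolds, and `A` its graded algebra of differential forms
(graded by `G`, wedge = `*`), with exterior derivative `d` satisfying the graded Leibniz
rule and Stokes' theorem `∫_T dξ = Σᵢ ∫_{∂ᵢT} ξ|_{∂ᵢT}`, where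
`∂T = (∂T₁×T₂×T₃) ∪ (T₁×∂T₂×T₃) ∪ (T₁×T₂×∂T₃)` and `rᵢ` is restriction to the `i`-th
boundary face.  Suppose each `Bᵢ` is divergence free (`d(ι_{Bᵢ}μᵢ) = 0`) and tangent to
`∂Tᵢ` (the restriction of `ι_{Bᵢ}μᵢ` to the `i`-th boundary face vanishes).  If `β` is a
closed 1-form and `α` a smooth 1-form on `T`, then
`∫_T (β ∧ dα) ∧ ι_{B₁}μ₁ ∧ ι_{B₂}μ₂ ∧ ι_{B₃}μ₃ = 0`. -/
theorem closed_one_form_pairing_vanishes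
    {A : Type*} [Ring A] [Algebra ℝ A]
    {Abd : Fin 3 → Type*} [∀ i, Ring (Abd i)] [∀ i, Algebra ℝ (Abd i)]
    (G : ℕ → Submodule ℝ A)               -- grading of forms by degree
    (d : A →ₗ[ℝ] A)                        -- exterior derivative
    (hLeibniz : ∀ {p : ℕ} (x y : A), x ∈ G p →
      d (x * y) = d x * y + ((-1 : ℝ) ^ p) • (x * d y))
    (r : ∀ i, A →ₐ[ℝ] Abd i)                -- restriction to the i-th boundary face
    (intT : A →ₗ[ℝ] ℝ)                     -- integration over T (of 9-forms)
    (intBdry : ∀ i, Abd i →ₗ[ℝ] ℝ)          -- integration over the boundary faces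
    (hStokes : ∀ x : A, intT (d x) = ∑ i, intBdry i (r i x))
    (β α : A) (hβ : β ∈ G 1) (hα : α ∈ G 1)
    (hβclosed : d β = 0)
    (w : Fin 3 → A)                        -- the 2-forms ι_{Bᵢ}μᵢ
    (hw : ∀ i, w i ∈ G 2)
    (hdiv : ∀ i, d (w i) = 0)              -- the Bᵢ are divergence free
    (htang : ∀ i, r i (w i) = 0) :         -- the Bᵢ are tangent to ∂Tᵢ
    intT (β * d α * (w 0 * w 1 * w 2)) = 0 := by
  -- W := w 0 * (w 1 * w 2) is closed
  have h12 : d (w 1 * w 2) = 0 := by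
    rw [hLeibniz _ _ (hw 1), hdiv 1, hdiv 2]; simp
  have hW : d (w 0 * (w 1 * w 2)) = 0 := by
    rw [hLeibniz _ _ (hw 0), hdiv 0, h12]; simp
  -- d (α * W) = d α * W
  have hX : d (α * (w 0 * (w 1 * w 2))) = d α * (w 0 * (w 1 * w 2)) := by
    rw [hLeibniz _ _ hα, hW]; simp
  -- d (β * (α * W)) = - (β * (d α * W))
  have key : d (β * (α * (w 0 * (w 1 * w 2)))) = -(β * (d α * (w 0 * (w 1 * w 2)))) := by
    rw [hLeibniz _ _ hβ, hβclosed, hX]; simp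
  have hre : ∀ i, r i (β * (α * (w 0 * (w 1 * w 2)))) = 0 := by
    intro i
    fin_cases i <;> simp [map_mul, htang 0, htang 1, htang 2]
  have hint : intT (d (β * (α * (w 0 * (w 1 * w 2))))) = 0 := by
    rw [hStokes]
    simp [hre]
  rw [key, map_neg] at hint
  have : intT (β * (d α * (w 0 * (w 1 * w 2)))) = 0 := by linarith
  calc intT (β * d α * (w 0 * w 1 * w 2))
      = intT (β * (d α * (w 0 * (w 1 * w 2)))) := by rw [mul_assoc, mul_assoc (w 0)]
    _ = 0 := this
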